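/- Let H be a hypergraph with a partition (Red, X, Blue) of V(H) such that no hyperedge of H contains both a red and a blue vertex. Let F be a reduced elimination forest of H. If U ⊆ Red ∪ Blue is the set of descendants of some vertex u in F, then U is monochromatic, i.e., U ⊆ Red or U ⊆ Blue. The same conclusion holds if U = F_v ∪ {u} ⊆ Red ∪ Blue where v is a child of u and F_v denotes the descendants of v. -/

import Mathlib

/-- A hypergraph on vertex type `V`: a set of nonempty hyperedges. -/
structure Hypergraph' (V : Type*) where
  E : Set (Set V)
  edge_nonempty : ∀ e ∈ E, e.Nonempty

/-- Two vertices are adjacent if they are distinct and share a hyperedge. -/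
def Hypergraph'.adj {V : Type*} (H : Hypergraph' V) (u v : V) : Prop :=
  u ≠ v ∧ ∃ e ∈ H.E, u ∈ e ∧ v ∈ e

/-- A rooted forest on `V`, given by parent pointers, with no infinite ancestor chains. -/
structure RootedForest (V : Type*) where
  parent : V → Option V
  wf : WellFounded fun a b => parent b = some a

/-- `F.anc a b` : `a` is an ancestor of `b` (every vertex is an ancestor of itself). -/
def RootedForest.anc {V : Type*} (F : RootedForest V) (a b : V) : Prop :=
  Relation.ReflTransGen (fun x y => F.parent x = some y) b a

/-- The set of descendants of `x` (including `x` itself). -/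
def RootedForest.desc {V : Type*} (F : RootedForest V) (x : V) : Set V :=
  {v | F.anc x v}

/-- `F` is an elimination forest of `H`: any two adjacent vertices are in
ancestor–descendant relation. -/
def IsEliminationForest {V : Type*} (H : Hypergraph' V) (F : RootedForest V) : Prop :=
  ∀ u v, H.adj u v → F.anc u v ∨ F.anc v u

/-- `F` is reduced: every non-leaf vertex `u` is adjacent in `H` to the subtree
rooted at each of its children. -/
def IsReducedForest {V : Type*} (H : Hypergraph' V) (F : RootedForest V) : Prop :=
  ∀ u v, F.parent v = some u → ∃ w ∈ F.desc v, H.adj u w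

/-- The subhypergraph of `H` induced by `S` is connected. -/
def HConnectedOn {V : Type*} (H : Hypergraph' V) (S : Set V) : Prop :=
  ∀ a ∈ S, ∀ b ∈ S,
    Relation.ReflTransGen (fun x y => x ∈ S ∧ y ∈ S ∧ H.adj x y) a b


section Aux

variable {V : Type*} (F : RootedForest V)

lemma self_mem_desc (u : V) : u ∈ F.desc u := Relation.ReflTransGen.refl

lemma desc_mono {u v : V} (h : F.parent v = some u) : F.desc v ⊆ F.desc u := by
  intro x hx
  exact Relation.ReflTransGen.tail hx h

lemma not_mem_desc {u v : V} (h : F.parent v = some u) : u ∉ F.desc v := by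
  intro hu
  have hcyc : Relation.TransGen (fun x y => F.parent x = some y) u u :=
    Relation.TransGen.tail' hu h
  have hcyc' : Relation.TransGen (fun a b => F.parent b = some a) u u := by
    exact Relation.TransGen.swap _ _ hcyc
  exact (F.wf.transGen.isIrrefl.irrefl u) hcyc'

lemma mem_desc_cases {u x : V} (h : x ∈ F.desc u) :
    x = u ∨ ∃ v, F.parent v = some u ∧ x ∈ F.desc v := by
  rcases Relation.ReflTransGen.cases_tail h with h | ⟨c, hc, hpc⟩
  · exact Or.inl h.symm
  · exact Or.inr ⟨c, hpc, hc⟩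

lemma desc_lt [Fintype V] {u v : V} (h : F.parent v = some u) :
    (F.desc v).ncard < (F.desc u).ncard := by
  apply Set.ncard_lt_ncard _ (Set.toFinite _)
  exact ⟨desc_mono F h, fun hsub => not_mem_desc F h (hsub (self_mem_desc F u))⟩

lemma mono_aux {V : Type*} [Fintype V] (H : Hypergraph' V) (F : RootedForest V)
    (hred : IsReducedForest H F) (A B : Set V)
    (hsep : ∀ e ∈ H.E, ¬((e ∩ A).Nonempty ∧ (e ∩ B).Nonempty)) :
    ∀ u : V, u ∈ A → F.desc u ⊆ A ∪ B → F.desc u ⊆ A := by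
  have key : ∀ n : ℕ, ∀ A B : Set V,
      (∀ e ∈ H.E, ¬((e ∩ A).Nonempty ∧ (e ∩ B).Nonempty)) →
      ∀ u : V, (F.desc u).ncard ≤ n → u ∈ A → F.desc u ⊆ A ∪ B →
      F.desc u ⊆ A := by
    intro n
    induction n with
    | zero =>
      intro A B hsep u hn hu hsub
      have h0 : F.desc u = ∅ := (Set.ncard_eq_zero (Set.toFinite _)).mp (Nat.le_zero.mp hn)
      exact absurd (self_mem_desc F u) (by simp [h0])
    | succ n IH =>
      intro A B hsep u hn hu hsub x hx
      rcases mem_desc_cases F hx with rfl | ⟨v, hv, hxv⟩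
      · exact hu
      · obtain ⟨w, hw, hne, e, he, hue, hwe⟩ := hred u v hv
        have hvsub : F.desc v ⊆ A ∪ B := fun y hy => hsub (desc_mono F hv hy)
        have hvn : (F.desc v).ncard ≤ n :=
          Nat.lt_succ_iff.mp (lt_of_lt_of_le (desc_lt F hv) hn)
        rcases hvsub (self_mem_desc F v) with hvA | hvB
        · exact IH A B hsep v hvn hvA hvsub hxv
        · have hsep' : ∀ e ∈ H.E, ¬((e ∩ B).Nonempty ∧ (e ∩ A).Nonempty) :=
            fun e he h => hsep e he ⟨h.2, h.1⟩
          have hwB : w ∈ B :=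
            IH B A hsep' v hvn hvB (fun y hy => Or.symm (hvsub hy)) hw
          exact absurd ⟨⟨u, hue, hu⟩, ⟨w, hwe, hwB⟩⟩ (hsep e he)
  intro u hu; exact key (F.desc u).ncard A B hsep u le_rfl hu

end Aux

/-- Red–blue monochromaticity of subtrees in a reduced elimination forest:
if `(Red, X, Blue)` partitions `V(H)` and no hyperedge meets both `Red` and `Blue`,
then any set of descendants `F.desc u` contained in `Red ∪ Blue` is monochromatic,
and likewise for `{u} ∪ F.desc v` where `v` is a child of `u`. -/
theorem stmt_3 {V : Type*} [Fintype V] (H : Hypergraph' V) (F : RootedForest V)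
    (hEF : IsEliminationForest H F) (hred : IsReducedForest H F)
    (Red X Blue : Set V) (hcover : Red ∪ X ∪ Blue = Set.univ)
    (hRX : Disjoint Red X) (hRB : Disjoint Red Blue) (hXB : Disjoint X Blue)
    (hsep : ∀ e ∈ H.E, ¬((e ∩ Red).Nonempty ∧ (e ∩ Blue).Nonempty)) :
    (∀ u : V, F.desc u ⊆ Red ∪ Blue → F.desc u ⊆ Red ∨ F.desc u ⊆ Blue) ∧
    (∀ u v : V, F.parent v = some u → insert u (F.desc v) ⊆ Red ∪ Blue →
      insert u (F.desc v) ⊆ Red ∨ insert u (F.desc v) ⊆ Blue) := by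
  have hsep' : ∀ e ∈ H.E, ¬((e ∩ Blue).Nonempty ∧ (e ∩ Red).Nonempty) := by
    intro e he h; exact hsep e he ⟨h.2, h.1⟩
  have part1 : ∀ u : V, F.desc u ⊆ Red ∪ Blue → F.desc u ⊆ Red ∨ F.desc u ⊆ Blue := by
    intro u hsub
    rcases hsub (self_mem_desc F u) with hu | hu
    · exact Or.inl (mono_aux H F hred Red Blue hsep u hu hsub)
    · exact Or.inr (mono_aux H F hred Blue Red hsep' u hu (fun y hy => Or.symm (hsub hy)))
  refine ⟨part1, fun u v hv hsub => ?_⟩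
  have hsubv : F.desc v ⊆ Red ∪ Blue := fun y hy => hsub (Set.mem_insert_of_mem u hy)
  have huRB : u ∈ Red ∪ Blue := hsub (Set.mem_insert u _)
  obtain ⟨w, hw, hne, e, he, hue, hwe⟩ := hred u v hv
  rcases part1 v hsubv with hV | hV
  · left
    intro x hx
    rcases Set.mem_insert_iff.mp hx with rfl | hx
    · rcases huRB with h | h
      · exact h
      · exact absurd ⟨⟨w, hwe, hV hw⟩, ⟨x, hue, h⟩⟩ (hsep e he)
    · exact hV hx
  · right
    intro x hx
    rcases Set.mem_insert_iff.mp hx with rfl | hx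
    · rcases huRB with h | h
      · exact absurd ⟨⟨x, hue, h⟩, ⟨w, hwe, hV hw⟩⟩ (hsep e he)
      · exact h
    · exact hV hx
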